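/- For every L > 0, the probability that the backbone tree of the p-percolated Galton–Watson tree does not branch over one L-level, namely f_p'(q_p)^{⌊L/(p−p_c)⌋}, converges to e^{−m₁ L} as p decreases to p_c; in particular there exist p_d > p_c and constants 0 < a₁ ≤ a₂ < 1 such that a₁ ≤ f_p'(q_p)^{⌊L/(p−p_c)⌋} ≤ a₂ for all p ∈ (p_c, p_d). -/

import Mathlib

open Filter Set Topology
open scoped Topology

/-- The probability generating function `f(s) = ∑ₖ aₖ sᵏ` of a distribution `a` on ℕ. -/
noncomputable def pgf (a : ℕ → ℝ) (s : ℝ) : ℝ := ∑' n, a n * s ^ n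

/-- The generating function `f_p(s) = f(ps + 1 - p)` of the binomially `p`-thinned
(percolated) offspring distribution. -/
noncomputable def pgfp (a : ℕ → ℝ) (p s : ℝ) : ℝ := pgf a (p * s + 1 - p)


lemma nk2 (n : ℕ) : 0 ≤ (n:ℝ) * ((n:ℝ) - 1) := by
  rcases Nat.eq_zero_or_pos n with h | h
  · simp [h]
  · have : (1:ℝ) ≤ n := by exact_mod_cast h
    nlinarith

lemma nk3 (n : ℕ) : 0 ≤ (n:ℝ) * ((n:ℝ) - 1) * ((n:ℝ) - 2) := by
  match n with
  | 0 => norm_num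
  | 1 => norm_num
  | (m+2) =>
    have hm : (0:ℝ) ≤ (m:ℝ) := Nat.cast_nonneg m
    push_cast
    have h : ((m:ℝ)+2)*((m:ℝ)+2-1)*((m:ℝ)+2-2) = ((m:ℝ)+2)*((m:ℝ)+1)*(m:ℝ) := by ring
    rw [h]; positivity

lemma bin1 (n : ℕ) {t : ℝ} (h0 : 0 ≤ t) (h1 : t ≤ 1) :
    1 - (n:ℝ) * t ≤ (1 - t) ^ n := by
  induction n with
  | zero => simp
  | succ n ih =>
    have h2 : (0:ℝ) ≤ 1 - t := by linarith
    have h3 := mul_le_mul_of_nonneg_right ih h2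
    have h5 : (0:ℝ) ≤ (n:ℝ) := Nat.cast_nonneg n
    push_cast
    rw [pow_succ (1-t) n]
    nlinarith [mul_nonneg h5 (sq_nonneg t)]

lemma bin2 (n : ℕ) {t : ℝ} (h0 : 0 ≤ t) (h1 : t ≤ 1) :
    (1 - t) ^ n ≤ 1 - (n:ℝ) * t + (n:ℝ) * ((n:ℝ) - 1) / 2 * t ^ 2 := by
  induction n with
  | zero => norm_num
  | succ n ih =>
    have h2 : (0:ℝ) ≤ 1 - t := by linarith
    have h3 := mul_le_mul_of_nonneg_right ih h2
    have h5 : (0:ℝ) ≤ (n:ℝ) := Nat.cast_nonneg n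
    have h6 := nk2 n
    have h7 : (0:ℝ) ≤ t^3 := by positivity
    push_cast
    rw [pow_succ (1-t) n]
    nlinarith [mul_nonneg h6 h7]

lemma bin3 (n : ℕ) {t : ℝ} (h0 : 0 ≤ t) (h1 : t ≤ 1) :
    1 - (n:ℝ) * t + (n:ℝ) * ((n:ℝ) - 1) / 2 * t ^ 2
      - (n:ℝ) * ((n:ℝ) - 1) * ((n:ℝ) - 2) / 6 * t ^ 3 ≤ (1 - t) ^ n := by
  induction n with
  | zero => norm_num
  | succ n ih =>
    have h2 : (0:ℝ) ≤ 1 - t := by linarith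
    have h3 := mul_le_mul_of_nonneg_right ih h2
    have h5 : (0:ℝ) ≤ (n:ℝ) := Nat.cast_nonneg n
    have h6 := nk2 n
    have h8 := nk3 n
    have h7 : (0:ℝ) ≤ t^4 := by positivity
    push_cast
    rw [pow_succ (1-t) n]
    nlinarith [mul_nonneg h8 h7, mul_nonneg h6 h7]

noncomputable def pgfD (a : ℕ → ℝ) (s : ℝ) : ℝ := ∑' n, a n * ((n : ℝ) * s ^ (n - 1))

lemma pgf_hasSum {a : ℕ → ℝ} (ha0 : ∀ k, 0 ≤ a k) (hSa : Summable a) {s : ℝ}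
    (h0 : 0 ≤ s) (h1 : s ≤ 1) : HasSum (fun n => a n * s ^ n) (pgf a s) := by
  have hS : Summable fun n => a n * s ^ n := by
    refine Summable.of_nonneg_of_le (fun n => mul_nonneg (ha0 n) (pow_nonneg h0 n))
      (fun n => ?_) hSa
    exact mul_le_of_le_one_right (ha0 n) (pow_le_one₀ h0 h1)
  simpa only [pgf] using hS.hasSum

lemma pgfD_hasSum {a : ℕ → ℝ} (ha0 : ∀ k, 0 ≤ a k)
    (hS1 : Summable fun n : ℕ => (n : ℝ) * a n) {s : ℝ}
    (h0 : 0 ≤ s) (h1 : s ≤ 1) :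
    HasSum (fun n => a n * ((n : ℝ) * s ^ (n - 1))) (pgfD a s) := by
  have hS : Summable fun n => a n * ((n : ℝ) * s ^ (n - 1)) := by
    refine Summable.of_nonneg_of_le
      (fun n => mul_nonneg (ha0 n) (mul_nonneg (Nat.cast_nonneg n) (pow_nonneg h0 _)))
      (fun n => ?_) hS1
    calc a n * ((n : ℝ) * s ^ (n - 1)) = ((n : ℝ) * a n) * s ^ (n - 1) := by ring
    _ ≤ ((n : ℝ) * a n) * 1 := by
        exact mul_le_mul_of_nonneg_left (pow_le_one₀ h0 h1)
          (mul_nonneg (Nat.cast_nonneg n) (ha0 n))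
    _ = (n : ℝ) * a n := mul_one _
  simpa only [pgfD] using hS.hasSum

lemma pgf_one {a : ℕ → ℝ} (ha1 : HasSum a 1) : pgf a 1 = 1 := by
  have : (fun n => a n * (1:ℝ) ^ n) = a := by funext n; simp
  rw [pgf, this, ha1.tsum_eq]

lemma hasDerivAt_pgf {a : ℕ → ℝ} (ha0 : ∀ k, 0 ≤ a k) (hSa : Summable a)
    (hS1 : Summable fun n : ℕ => (n : ℝ) * a n) {x : ℝ} (hx : x ∈ Ioo (-1:ℝ) 1) :
    HasDerivAt (pgf a) (pgfD a x) x := by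
  have habs : ∀ y : ℝ, y ∈ Ioo (-1:ℝ) 1 → |y| ≤ 1 := fun y hy =>
    (abs_le.2 ⟨hy.1.le, hy.2.le⟩)
  have huf : TendstoUniformlyOn
      (fun N (x : ℝ) => ∑ n ∈ Finset.range N, a n * ((n : ℝ) * x ^ (n - 1)))
      (fun x => ∑' n, a n * ((n : ℝ) * x ^ (n - 1))) atTop (Ioo (-1:ℝ) 1) := by
    refine tendstoUniformlyOn_tsum_nat (u := fun n => (n : ℝ) * a n) hS1 ?_
    intro n y hy
    have h1 : |y| ^ (n - 1) ≤ 1 := pow_le_one₀ (abs_nonneg y) (habs y hy)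
    have heq : ‖a n * ((n : ℝ) * y ^ (n - 1))‖ = a n * (n : ℝ) * |y| ^ (n - 1) := by
      rw [norm_mul, norm_mul, Real.norm_eq_abs, Real.norm_eq_abs, Real.norm_eq_abs,
        abs_of_nonneg (ha0 n), Nat.abs_cast, abs_pow, mul_assoc]
    rw [heq]
    calc a n * (n : ℝ) * |y| ^ (n - 1) ≤ a n * (n : ℝ) * 1 :=
          mul_le_mul_of_nonneg_left h1 (mul_nonneg (ha0 n) (Nat.cast_nonneg n))
      _ = (n : ℝ) * a n := by ring
  refine hasDerivAt_of_tendstoUniformlyOn (f := fun N (x : ℝ) => ∑ n ∈ Finset.range N, a n * x ^ n) isOpen_Ioo huf ?_ ?_ hx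
  · refine Eventually.of_forall (fun N y _ => ?_)
    exact HasDerivAt.fun_sum fun n _ => (hasDerivAt_pow n y).const_mul (a n)
  · intro y hy
    have h0 : |y| ≤ 1 := habs y hy
    have hS : Summable fun n => a n * y ^ n := by
      refine Summable.of_norm_bounded hSa (fun n => ?_)
      rw [norm_mul, Real.norm_eq_abs, Real.norm_eq_abs, abs_of_nonneg (ha0 n), abs_pow]
      exact mul_le_of_le_one_right (ha0 n) (pow_le_one₀ (abs_nonneg y) h0)
    simpa only [pgf] using hS.hasSum.tendsto_sum_nat

lemma pgf_upper {a : ℕ → ℝ} {m₁ m₂ : ℝ} (ha0 : ∀ k, 0 ≤ a k) (ha1 : HasSum a 1)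
    (hm1 : HasSum (fun k : ℕ => (k:ℝ) * a k) m₁)
    (hm2 : HasSum (fun k : ℕ => (k:ℝ)*((k:ℝ)-1)*a k) m₂) {t : ℝ} (h0 : 0 ≤ t) (h1 : t ≤ 1) :
    pgf a (1 - t) ≤ 1 - m₁ * t + m₂ / 2 * t ^ 2 := by
  have hs := pgf_hasSum ha0 ha1.summable (show (0:ℝ) ≤ 1 - t by linarith)
    (show (1:ℝ) - t ≤ 1 by linarith)
  have hb : HasSum (fun n : ℕ => a n * (1 - (n:ℝ)*t + (n:ℝ)*((n:ℝ)-1)/2*t^2))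
      (1 - m₁*t + m₂/2*t^2) := by
    have h := (ha1.sub (hm1.mul_right t)).add (hm2.mul_right (t^2/2))
    have he : (fun n : ℕ => a n - (n:ℝ)*a n*t + ((n:ℝ)*((n:ℝ)-1)*a n)*(t^2/2))
        = fun n : ℕ => a n * (1 - (n:ℝ)*t + (n:ℝ)*((n:ℝ)-1)/2*t^2) := by
      funext n; ring
    have hv : 1 - m₁*t + m₂*(t^2/2) = 1 - m₁*t + m₂/2*t^2 := by ring
    rw [he, hv] at h
    exact h
  refine le_of_le_of_eq (hasSum_le (fun n => ?_) hs hb) (by ring)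
  exact mul_le_mul_of_nonneg_left (bin2 n h0 h1) (ha0 n)

lemma pgf_lower {a : ℕ → ℝ} {m₁ m₂ m₃ : ℝ} (ha0 : ∀ k, 0 ≤ a k) (ha1 : HasSum a 1)
    (hm1 : HasSum (fun k : ℕ => (k:ℝ) * a k) m₁)
    (hm2 : HasSum (fun k : ℕ => (k:ℝ)*((k:ℝ)-1)*a k) m₂)
    (hm3 : HasSum (fun k : ℕ => (k:ℝ)*((k:ℝ)-1)*((k:ℝ)-2)*a k) m₃)
    {t : ℝ} (h0 : 0 ≤ t) (h1 : t ≤ 1) :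
    1 - m₁ * t + m₂ / 2 * t ^ 2 - m₃ / 6 * t ^ 3 ≤ pgf a (1 - t) := by
  have hs := pgf_hasSum ha0 ha1.summable (show (0:ℝ) ≤ 1 - t by linarith)
    (show (1:ℝ) - t ≤ 1 by linarith)
  have hb : HasSum
      (fun n : ℕ => a n * (1 - (n:ℝ)*t + (n:ℝ)*((n:ℝ)-1)/2*t^2
        - (n:ℝ)*((n:ℝ)-1)*((n:ℝ)-2)/6*t^3))
      (1 - m₁*t + m₂/2*t^2 - m₃/6*t^3) := by
    have h := ((ha1.sub (hm1.mul_right t)).add (hm2.mul_right (t^2/2))).sub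
      (hm3.mul_right (t^3/6))
    have he : (fun n : ℕ => a n - (n:ℝ)*a n*t + ((n:ℝ)*((n:ℝ)-1)*a n)*(t^2/2)
        - ((n:ℝ)*((n:ℝ)-1)*((n:ℝ)-2)*a n)*(t^3/6))
        = fun n : ℕ => a n * (1 - (n:ℝ)*t + (n:ℝ)*((n:ℝ)-1)/2*t^2
          - (n:ℝ)*((n:ℝ)-1)*((n:ℝ)-2)/6*t^3) := by
      funext n; ring
    have hv : 1 - m₁*t + m₂*(t^2/2) - m₃*(t^3/6) = 1 - m₁*t + m₂/2*t^2 - m₃/6*t^3 := by ring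
    rw [he, hv] at h
    exact h
  refine hasSum_le (fun n => ?_) hb hs
  exact mul_le_mul_of_nonneg_left (bin3 n h0 h1) (ha0 n)

lemma pgfD_lower {a : ℕ → ℝ} {m₁ m₂ : ℝ} (ha0 : ∀ k, 0 ≤ a k)
    (hS1 : Summable fun n : ℕ => (n:ℝ) * a n)
    (hm1 : HasSum (fun k : ℕ => (k:ℝ) * a k) m₁)
    (hm2 : HasSum (fun k : ℕ => (k:ℝ)*((k:ℝ)-1)*a k) m₂)
    {t : ℝ} (h0 : 0 ≤ t) (h1 : t ≤ 1) :
    m₁ - m₂ * t ≤ pgfD a (1 - t) := by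
  have hs := pgfD_hasSum ha0 hS1 (show (0:ℝ) ≤ 1 - t by linarith)
    (show (1:ℝ) - t ≤ 1 by linarith)
  have hb : HasSum (fun n : ℕ => (n:ℝ)*a n - (n:ℝ)*((n:ℝ)-1)*a n*t) (m₁ - m₂*t) :=
    hm1.sub ((hm2.mul_right t))
  refine hasSum_le (fun n => ?_) hb hs
  match n with
  | 0 => simp
  | (m+1) =>
    have hb1 := bin1 m h0 h1
    have hnn : (0:ℝ) ≤ a (m+1) * ((m:ℝ)+1) :=
      mul_nonneg (ha0 (m+1)) (by positivity)
    have key := mul_le_mul_of_nonneg_left hb1 hnn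
    simp only [Nat.add_sub_cancel]
    push_cast
    nlinarith [key]

lemma pgfD_upper {a : ℕ → ℝ} {m₁ m₂ m₃ : ℝ} (ha0 : ∀ k, 0 ≤ a k)
    (hS1 : Summable fun n : ℕ => (n:ℝ) * a n)
    (hm1 : HasSum (fun k : ℕ => (k:ℝ) * a k) m₁)
    (hm2 : HasSum (fun k : ℕ => (k:ℝ)*((k:ℝ)-1)*a k) m₂)
    (hm3 : HasSum (fun k : ℕ => (k:ℝ)*((k:ℝ)-1)*((k:ℝ)-2)*a k) m₃)
    {t : ℝ} (h0 : 0 ≤ t) (h1 : t ≤ 1) :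
    pgfD a (1 - t) ≤ m₁ - m₂ * t + m₃ / 2 * t ^ 2 := by
  have hs := pgfD_hasSum ha0 hS1 (show (0:ℝ) ≤ 1 - t by linarith)
    (show (1:ℝ) - t ≤ 1 by linarith)
  have hb : HasSum
      (fun n : ℕ => (n:ℝ)*a n - (n:ℝ)*((n:ℝ)-1)*a n*t
        + (n:ℝ)*((n:ℝ)-1)*((n:ℝ)-2)*a n*(t^2/2))
      (m₁ - m₂*t + m₃/2*t^2) := by
    have h := (hm1.sub (hm2.mul_right t)).add (hm3.mul_right (t^2/2))
    have he : (fun n : ℕ => (n:ℝ)*a n - ((n:ℝ)*((n:ℝ)-1)*a n)*t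
        + ((n:ℝ)*((n:ℝ)-1)*((n:ℝ)-2)*a n)*(t^2/2))
        = fun n : ℕ => (n:ℝ)*a n - (n:ℝ)*((n:ℝ)-1)*a n*t
          + (n:ℝ)*((n:ℝ)-1)*((n:ℝ)-2)*a n*(t^2/2) := by
      funext n; ring
    have hv : m₁ - m₂*t + m₃*(t^2/2) = m₁ - m₂*t + m₃/2*t^2 := by ring
    rw [he, hv] at h
    exact h
  refine hasSum_le (fun n => ?_) hs hb
  match n with
  | 0 => simp
  | (m+1) =>
    have hb2 := bin2 m h0 h1
    have hnn : (0:ℝ) ≤ a (m+1) * ((m:ℝ)+1) :=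
      mul_nonneg (ha0 (m+1)) (by positivity)
    have key := mul_le_mul_of_nonneg_left hb2 hnn
    simp only [Nat.add_sub_cancel]
    push_cast
    nlinarith [key]

lemma pgf_convex {a : ℕ → ℝ} (ha0 : ∀ k, 0 ≤ a k) (hSa : Summable a)
    {x y lam mu : ℝ} (hx0 : 0 ≤ x) (hx1 : x ≤ 1) (hy0 : 0 ≤ y) (hy1 : y ≤ 1)
    (hl : 0 ≤ lam) (hm : 0 ≤ mu) (hlm : lam + mu = 1) :
    pgf a (lam * x + mu * y) ≤ lam * pgf a x + mu * pgf a y := by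
  have hz0 : 0 ≤ lam * x + mu * y := by positivity
  have hz1 : lam * x + mu * y ≤ 1 := by nlinarith
  have hs := pgf_hasSum ha0 hSa hz0 hz1
  have hsx := pgf_hasSum ha0 hSa hx0 hx1
  have hsy := pgf_hasSum ha0 hSa hy0 hy1
  have hb := (hsx.mul_left lam).add (hsy.mul_left mu)
  refine hasSum_le (fun n => ?_) hs hb
  have hc := (convexOn_pow n).2 (mem_Ici.2 hx0) (mem_Ici.2 hy0) hl hm hlm
  simp only [smul_eq_mul] at hc
  calc a n * (lam*x+mu*y)^n ≤ a n * (lam*x^n + mu*y^n) :=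
        mul_le_mul_of_nonneg_left hc (ha0 n)
    _ = lam*(a n*x^n) + mu*(a n*y^n) := by ring


lemma floor_mul_tendsto (pc L : ℝ) (hL : 0 < L) :
    Tendsto (fun p => (⌊L / (p - pc)⌋₊ : ℝ) * (p - pc)) (𝓝[>] pc) (𝓝 L) := by
  have hev : ∀ᶠ p in 𝓝[>] pc, L - (p - pc) ≤ (⌊L / (p - pc)⌋₊ : ℝ) * (p - pc)
      ∧ (⌊L / (p - pc)⌋₊ : ℝ) * (p - pc) ≤ L := by
    filter_upwards [Ioo_mem_nhdsGT (by linarith : pc < pc + L)] with p hp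
    have hε : 0 < p - pc := sub_pos.2 hp.1
    have hdiv : 0 ≤ L / (p - pc) := div_nonneg hL.le hε.le
    constructor
    · have h := Nat.sub_one_lt_floor (L / (p - pc))
      have h2 := mul_lt_mul_of_pos_right h hε
      rw [sub_mul, div_mul_cancel₀ _ hε.ne'] at h2
      linarith
    · have h := Nat.floor_le hdiv
      have h2 := mul_le_mul_of_nonneg_right h hε.le
      rwa [div_mul_cancel₀ _ hε.ne'] at h2
  have h1 : Tendsto (fun p : ℝ => L - (p - pc)) (𝓝[>] pc) (𝓝 L) := by
    have h : Tendsto (fun p : ℝ => L - (p - pc)) (𝓝 pc) (𝓝 (L - (pc - pc))) :=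
      tendsto_const_nhds.sub (tendsto_id.sub tendsto_const_nhds)
    simpa using h.mono_left nhdsWithin_le_nhds
  exact tendsto_of_tendsto_of_tendsto_of_le_of_le' h1 tendsto_const_nhds
    (hev.mono fun p h => h.1) (hev.mono fun p h => h.2)

lemma pow_floor_tendsto (pc L m₁ c : ℝ) (hL : 0 < L) :
    Tendsto (fun p => (1 - m₁*(p - pc) + c*(p - pc)^2) ^ ⌊L / (p - pc)⌋₊) (𝓝[>] pc)
      (𝓝 (Real.exp (-(m₁ * L)))) := by
  set x : ℝ → ℝ := fun p => 1 - m₁*(p - pc) + c*(p - pc)^2 with hxdef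
  have hx1 : Tendsto x (𝓝[>] pc) (𝓝 1) := by
    have h : Tendsto x (𝓝 pc) (𝓝 (1 - m₁*(pc - pc) + c*(pc - pc)^2)) := by
      apply Continuous.tendsto; fun_prop
    simpa using h.mono_left nhdsWithin_le_nhds
  have hpos : ∀ᶠ p in 𝓝[>] pc, 0 < x p := hx1.eventually (eventually_gt_nhds one_pos)
  have hNε := floor_mul_tendsto pc L hL
  have hA : Tendsto (fun p => (⌊L / (p - pc)⌋₊ : ℝ) * (x p - 1)) (𝓝[>] pc)
      (𝓝 (-(m₁*L))) := by
    have h2 : Tendsto (fun p : ℝ => -m₁ + c*(p - pc)) (𝓝[>] pc) (𝓝 (-m₁)) := by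
      have h : Tendsto (fun p : ℝ => -m₁ + c*(p - pc)) (𝓝 pc) (𝓝 (-m₁ + c*(pc - pc))) := by
        apply Continuous.tendsto; fun_prop
      simpa using h.mono_left nhdsWithin_le_nhds
    have h3 := hNε.mul h2
    rw [show L * -m₁ = -(m₁*L) by ring] at h3
    refine h3.congr fun p => ?_
    simp only [hxdef]; ring
  have hB : Tendsto (fun p => (⌊L / (p - pc)⌋₊ : ℝ) * (1 - (x p)⁻¹)) (𝓝[>] pc)
      (𝓝 (-(m₁*L))) := by
    have hinv : Tendsto (fun p => (x p)⁻¹) (𝓝[>] pc) (𝓝 1) := by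
      simpa using hx1.inv₀ one_ne_zero
    have h3 := hA.mul hinv
    rw [mul_one] at h3
    refine Tendsto.congr' ?_ h3
    filter_upwards [hpos] with p hp
    have hne : x p ≠ 0 := hp.ne'
    field_simp
  have hlog : Tendsto (fun p => (⌊L / (p - pc)⌋₊ : ℝ) * Real.log (x p)) (𝓝[>] pc)
      (𝓝 (-(m₁*L))) := by
    refine tendsto_of_tendsto_of_tendsto_of_le_of_le' hB hA ?_ ?_
    · filter_upwards [hpos] with p hp
      exact mul_le_mul_of_nonneg_left (Real.one_sub_inv_le_log_of_pos hp) (Nat.cast_nonneg _)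
    · filter_upwards [hpos] with p hp
      exact mul_le_mul_of_nonneg_left (Real.log_le_sub_one_of_pos hp) (Nat.cast_nonneg _)
  have hexp := (Real.continuous_exp.tendsto _).comp hlog
  refine Tendsto.congr' ?_ hexp
  filter_upwards [hpos] with p hp
  simp only [Function.comp_apply]
  rw [Real.exp_nat_mul, Real.exp_log hp]

set_option maxHeartbeats 2000000

/-- For every `L > 0`, the probability that the backbone tree does not branch over one
`L`-level, namely `f_p'(q_p)^⌊L/(p - p_c)⌋`, converges to `e^{-m₁ L}` as `p ↓ p_c`;
in particular it is eventually bounded between constants `0 < a₁ ≤ a₂ < 1`. -/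
theorem no_branching_probability_over_level
    (a : ℕ → ℝ) (m₁ m₂ m₃ pc : ℝ) (q : ℝ → ℝ) (L : ℝ) (hL : 0 < L)
    (ha0 : ∀ k, 0 ≤ a k) (ha1 : HasSum a 1)
    (hm1 : HasSum (fun k : ℕ => (k : ℝ) * a k) m₁) (h1m : 1 < m₁)
    (hm2 : HasSum (fun k : ℕ => (k : ℝ) * ((k : ℝ) - 1) * a k) m₂)
    (hm3 : HasSum (fun k : ℕ => (k : ℝ) * ((k : ℝ) - 1) * ((k : ℝ) - 2) * a k) m₃)
    (hpc : pc = 1 / m₁)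
    (hq : ∀ p ∈ Set.Ioc pc 1, q p ∈ Set.Ico (0 : ℝ) 1 ∧ pgfp a p (q p) = q p) :
    Tendsto (fun p => deriv (pgfp a p) (q p) ^ ⌊L / (p - pc)⌋₊) (𝓝[>] pc)
      (𝓝 (Real.exp (-(m₁ * L)))) ∧
    ∃ pd, pc < pd ∧ ∃ a₁ a₂ : ℝ, 0 < a₁ ∧ a₁ ≤ a₂ ∧ a₂ < 1 ∧
      ∀ p ∈ Set.Ioo pc pd,
        deriv (pgfp a p) (q p) ^ ⌊L / (p - pc)⌋₊ ∈ Set.Icc a₁ a₂ := by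
  have hm1pos : (0:ℝ) < m₁ := by linarith
  have hpc0 : 0 < pc := by rw [hpc]; positivity
  have hpc1 : pc < 1 := by rw [hpc, div_lt_one hm1pos]; linarith
  have hm1pc : m₁ * pc = 1 := by rw [hpc]; field_simp
  have Sa := ha1.summable
  have S1 := hm1.summable
  have hm2nonneg : 0 ≤ m₂ :=
    hasSum_le (fun n => mul_nonneg (nk2 n) (ha0 n)) hasSum_zero hm2
  have hm3nonneg : 0 ≤ m₃ :=
    hasSum_le (fun n => mul_nonneg (nk3 n) (ha0 n)) hasSum_zero hm3
  have hm2pos : 0 < m₂ := by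
    rcases lt_or_eq_of_le hm2nonneg with h | h
    · exact h
    · exfalso
      rw [← h] at hm2
      have hzf := (hasSum_zero_iff_of_nonneg
        (fun n => mul_nonneg (nk2 n) (ha0 n))).mp hm2
      have hak : ∀ n : ℕ, 2 ≤ n → a n = 0 := by
        intro n hn
        have h2 : (0:ℝ) < (n:ℝ)*((n:ℝ)-1) := by
          have h2' : (2:ℝ) ≤ (n:ℝ) := by exact_mod_cast hn
          exact mul_pos (by linarith only [h2']) (by linarith only [h2'])
        have hz := congrFun hzf n
        simp only [Pi.zero_apply] at hz
        rcases mul_eq_zero.mp hz with h' | h'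
        · exact absurd h' h2.ne'
        · exact h'
      have hle : m₁ ≤ 1 := by
        refine hasSum_le (fun n => ?_) hm1 ha1
        match n with
        | 0 => simpa using ha0 0
        | 1 => simp
        | (m+2) => rw [hak (m+2) (by omega)]; simp
      linarith
  obtain ⟨C, hC⟩ : ∃ x : ℝ, x = 4*m₁/(m₂*pc^2) := ⟨_, rfl⟩
  have hC0 : 0 < C := by
    rw [hC]; exact div_pos (by linarith) (mul_pos hm2pos (pow_pos hpc0 2))
  have hm3C2 : (0:ℝ) ≤ m₃*C^2 := mul_nonneg hm3nonneg (sq_nonneg C)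
  obtain ⟨K, hK⟩ : ∃ x : ℝ, x = m₃*C^2/2 + 1 := ⟨_, rfl⟩
  have hK0 : 0 < K := by rw [hK]; linarith only [hm3C2]
  obtain ⟨δ, hδ⟩ : ∃ x : ℝ, x = min (min (1 - pc) (1/C)) (3*m₁/(m₃*C^2+1)) := ⟨_, rfl⟩
  have hδ0 : 0 < δ := by
    rw [hδ]
    refine lt_min (lt_min (by linarith) (one_div_pos.2 hC0)) (div_pos (by linarith) (by linarith only [hm3C2]))
  have hδA : δ ≤ 1 - pc := hδ ▸ (min_le_left _ _).trans (min_le_left _ _)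
  have hδB : δ ≤ 1/C := hδ ▸ (min_le_left _ _).trans (min_le_right _ _)
  have hδC : δ ≤ 3*m₁/(m₃*C^2+1) := hδ ▸ min_le_right _ _
  have hEst : ∀ᶠ p in 𝓝[>] pc,
      1 - m₁*(p - pc) + (-K)*(p - pc)^2 ≤ deriv (pgfp a p) (q p)
      ∧ deriv (pgfp a p) (q p) ≤ 1 - m₁*(p - pc) + K*(p - pc)^2 := by
    filter_upwards [Ioo_mem_nhdsGT (by linarith : pc < pc + δ)] with p hp
    obtain ⟨hppc, hpδ⟩ := hp
    have hε0 : 0 < p - pc := sub_pos.2 hppc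
    obtain ⟨ε, hεdef⟩ : ∃ x : ℝ, x = p - pc := ⟨_, rfl⟩
    rw [← hεdef]
    rw [← hεdef] at hε0
    have hεδ : ε < δ := by rw [hεdef]; linarith
    have hp1 : p < 1 := by linarith
    have hp0 : 0 < p := lt_trans hpc0 hppc
    have hCε1 : C*ε < 1 := by
      have h' : C*ε < C*(1/C) := mul_lt_mul_of_pos_left (lt_of_lt_of_le hεδ hδB) hC0
      rwa [mul_one_div_cancel hC0.ne'] at h'
    have hεM : (m₃*C^2+1)*ε < 3*m₁ := by
      have h' : ε < 3*m₁/(m₃*C^2+1) := lt_of_lt_of_le hεδ hδC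
      have hM : (0:ℝ) < m₃*C^2+1 := by linarith only [hm3C2]
      rw [lt_div_iff₀ hM] at h'
      linarith [h']
    have hpmem : p ∈ Ioc pc 1 := ⟨hppc, hp1.le⟩
    obtain ⟨hqmem, hfix⟩ := hq p hpmem
    obtain ⟨hq0, hq1⟩ := hqmem
    simp only [pgfp] at hfix
    obtain ⟨u, hu⟩ : ∃ x : ℝ, x = 1 - q p := ⟨_, rfl⟩
    have hu0 : 0 < u := by rw [hu]; linarith
    have hu1 : u ≤ 1 := by rw [hu]; linarith
    have hpu0 : 0 < p*u := mul_pos hp0 hu0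
    have hpu1 : p*u ≤ 1 := by
      have h' := mul_le_mul hp1.le hu1 hu0.le zero_le_one
      simpa using h'
    have hσ : p * q p + 1 - p = 1 - p*u := by rw [hu]; ring
    have hfix' : pgf a (1 - p*u) = 1 - u := by rw [← hσ, hfix, hu]; ring
    have hm1ε : m₁ * p - 1 = m₁ * ε := by
      rw [hεdef]; rw [← hm1pc]; ring
    have hpm : p*m₁ = 1 + m₁*ε := by linarith [hm1ε]
    -- E1 : lower bound on u
    have hP2 := pgf_upper ha0 ha1 hm1 hm2 hpu0.le hpu1
    rw [hfix'] at hP2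
    have hE1 : m₁ * ε ≤ m₂/2 * p^2 * u := by
      have h2 : u * (m₁*p - 1) ≤ u * (m₂/2*p^2*u) := by linarith only [hP2]
      have h3 := (mul_le_mul_iff_of_pos_left hu0).mp h2
      linarith [hm1ε, h3]
    -- E2 : u < C * ε
    have huC : u < C * ε := by
      by_contra hcon
      push_neg at hcon
      have hCε0 : 0 < C*ε := mul_pos hC0 hε0
      have hlam0 : 0 ≤ C*ε/u := by positivity
      have hmu0 : 0 ≤ (u - C*ε)/u := div_nonneg (by linarith) hu0.le
      have hlm : C*ε/u + (u - C*ε)/u = 1 := by field_simp; ring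
      have hx0 : (0:ℝ) ≤ 1 - p*u := by linarith
      have hx1 : 1 - p*u ≤ 1 := by linarith
      have hcv := pgf_convex ha0 Sa hx0 hx1 zero_le_one le_rfl hlam0 hmu0 hlm
      rw [pgf_one ha1, hfix'] at hcv
      have harg : (C*ε/u)*(1-p*u) + ((u - C*ε)/u)*1 = 1 - p*(C*ε) := by
        field_simp; ring
      rw [harg] at hcv
      have hrhs : (C*ε/u)*(1-u) + ((u - C*ε)/u)*1 = 1 - C*ε := by
        field_simp; ring
      rw [hrhs] at hcv
      have ht'0 : (0:ℝ) ≤ p*(C*ε) := by positivity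
      have ht'1 : p*(C*ε) ≤ 1 := by
        have h' : p*(C*ε) ≤ 1*(C*ε) := mul_le_mul_of_nonneg_right hp1.le hCε0.le
        linarith only [h', hCε1]
      have hP3 := pgf_lower ha0 ha1 hm1 hm2 hm3 ht'0 ht'1
      have hcontr := hP3.trans hcv
      -- quantitative contradiction
      have hpcp : pc^2 ≤ p^2 := pow_le_pow_left₀ hpc0.le hppc.le 2
      have hkey : m₂/2*pc^2*C = 2*m₁ := by
        rw [hC]; field_simp; ring
      have hmc : (0:ℝ) ≤ m₂/2*C := le_of_lt (mul_pos (by linarith) hC0)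
      have hs := mul_le_mul_of_nonneg_left hpcp hmc
      have hk1 : 2*m₁ ≤ m₂/2 * p^2 * C := by linarith [hkey, hs]
      have hp3le : p^3 ≤ 1 := pow_le_one₀ hp0.le hp1.le
      have hk2 : m₃/6 * p^3 * C^2 * ε ≤ m₁/2 := by
        have s1 : m₃*C^2*p^3 ≤ m₃*C^2*1 := mul_le_mul_of_nonneg_left hp3le hm3C2
        have s2 := mul_le_mul_of_nonneg_right s1 hε0.le
        linarith [s2, hεM, hε0.le]
      have hq2 : (0:ℝ) ≤ C*ε^2 := le_of_lt (mul_pos hC0 (by positivity))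
      have t1 : 2*m₁*(C*ε^2) ≤ (m₂/2*p^2*C)*(C*ε^2) := mul_le_mul_of_nonneg_right hk1 hq2
      have t2 : (m₃/6*p^3*C^2*ε)*(C*ε^2) ≤ (m₁/2)*(C*ε^2) := mul_le_mul_of_nonneg_right hk2 hq2
      have t3 : 0 < m₁*(C*ε^2) := mul_pos hm1pos (mul_pos hC0 (by positivity))
      have t4 : m₁*(p*(C*ε)) = (1+m₁*ε)*(C*ε) := by rw [← hpm]; ring
      linarith only [hcontr, t1, t2, t3, t4]
    -- E3 : refined upper bound
    have hP3t := pgf_lower ha0 ha1 hm1 hm2 hm3 hpu0.le hpu1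
    rw [hfix'] at hP3t
    have h4 : p^3*u^2 ≤ C^2*ε^2 := by
      have hint1 : (0:ℝ) ≤ (1 - p^3)*u^2 :=
        mul_nonneg (sub_nonneg.2 (pow_le_one₀ hp0.le hp1.le (n := 3))) (sq_nonneg u)
      have hint2 : (0:ℝ) < (C*ε - u)*(C*ε + u) :=
        mul_pos (sub_pos.2 huC) (by linarith only [mul_pos hC0 hε0, hu0])
      linarith only [hint1, hint2]
    have hE3 : m₂/2 * p^2 * u ≤ m₁*ε + m₃/6*C^2*ε^2 := by
      have h2 : u * (m₂/2*p^2*u) ≤ u * ((m₁*p - 1) + m₃/6*p^3*u^2) := by linarith only [hP3t]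
      have h3 := (mul_le_mul_iff_of_pos_left hu0).mp h2
      linarith only [hm1ε, h3, mul_le_mul_of_nonneg_left h4 (by linarith only [hm3nonneg] : (0:ℝ) ≤ m₃/6)]
    -- derivative identity
    have hσmem : p * q p + 1 - p ∈ Ioo (-1:ℝ) 1 := by
      constructor
      · linarith only [mul_nonneg hp0.le hq0, hp1]
      · linarith only [mul_pos hp0 (show 0 < 1 - q p by linarith only [hq1])]
    have hder : HasDerivAt (pgfp a p) (pgfD a (p * q p + 1 - p) * p) (q p) := by
      have hout := hasDerivAt_pgf ha0 Sa S1 hσmem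
      have hin : HasDerivAt (fun s : ℝ => p*s + 1 - p) p (q p) := by
        simpa using (((hasDerivAt_id (q p)).const_mul p).add_const 1).sub_const p
      exact hout.comp (q p) hin
    have hDval := hder.deriv
    rw [hσ] at hDval
    -- hDval : deriv (pgfp a p) (q p) = pgfD a (1 - p*u) * p
    have hDup := pgfD_upper ha0 S1 hm1 hm2 hm3 hpu0.le hpu1
    have hDlo := pgfD_lower ha0 S1 hm1 hm2 hpu0.le hpu1
    rw [hDval]
    constructor
    · have h5 := mul_le_mul_of_nonneg_left hDlo hp0.le
      rw [hK]
      linarith only [h5, hE3, hpm, mul_nonneg hm3C2 (sq_nonneg ε), sq_nonneg ε]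
    · have h6 := mul_le_mul_of_nonneg_left hDup hp0.le
      rw [hK]
      linarith only [h6, hE1, hpm, sq_nonneg ε, mul_nonneg hm3C2 (sq_nonneg ε),
        mul_le_mul_of_nonneg_left h4 (by linarith only [hm3nonneg] : (0:ℝ) ≤ m₃/2)]
  -- limit assembly
  have hlo := pow_floor_tendsto pc L m₁ (-K) hL
  have hhi := pow_floor_tendsto pc L m₁ K hL
  have hbase : ∀ᶠ p in 𝓝[>] pc, 0 < 1 - m₁*(p-pc) + (-K)*(p-pc)^2 := by
    have hcont : Tendsto (fun p : ℝ => 1 - m₁*(p-pc) + (-K)*(p-pc)^2) (𝓝[>] pc) (𝓝 1) := by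
      have h : Tendsto (fun p : ℝ => 1 - m₁*(p-pc) + (-K)*(p-pc)^2) (𝓝 pc)
          (𝓝 (1 - m₁*(pc-pc) + (-K)*(pc-pc)^2)) := by
        apply Continuous.tendsto; fun_prop
      simpa using h.mono_left nhdsWithin_le_nhds
    exact hcont.eventually (eventually_gt_nhds one_pos)
  have hmain : Tendsto (fun p => deriv (pgfp a p) (q p) ^ ⌊L / (p - pc)⌋₊) (𝓝[>] pc)
      (𝓝 (Real.exp (-(m₁ * L)))) := by
    refine tendsto_of_tendsto_of_tendsto_of_le_of_le' hlo hhi ?_ ?_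
    · filter_upwards [hEst, hbase] with p hp hb
      exact pow_le_pow_left₀ hb.le hp.1 _
    · filter_upwards [hEst, hbase] with p hp hb
      exact pow_le_pow_left₀ (le_trans hb.le hp.1) hp.2 _
  refine ⟨hmain, ?_⟩
  obtain ⟨E, hE⟩ : ∃ x : ℝ, x = Real.exp (-(m₁*L)) := ⟨_, rfl⟩
  rw [← hE] at hmain
  have hE0 : 0 < E := by rw [hE]; exact Real.exp_pos _
  have hE1' : E < 1 := by
    rw [hE]
    have h := Real.exp_lt_exp.2 (show -(m₁*L) < 0 by
      linarith only [mul_pos hm1pos hL])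
    rwa [Real.exp_zero] at h
  have hmem : Icc (E/2) ((1+E)/2) ∈ 𝓝 E := Icc_mem_nhds (by linarith) (by linarith)
  have hev : ∀ᶠ p in 𝓝[>] pc,
      deriv (pgfp a p) (q p) ^ ⌊L / (p - pc)⌋₊ ∈ Icc (E/2) ((1+E)/2) :=
    hmain.eventually (eventually_of_mem hmem (fun x hx => hx))
  obtain ⟨pd, hpd, hsub⟩ := mem_nhdsGT_iff_exists_Ioo_subset.mp hev
  exact ⟨pd, hpd, E/2, (1+E)/2, by linarith, by linarith, by linarith,
    fun p hp => hsub hp⟩
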